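/- Suppose λ₁ ≥ λ₂ ≥ … ≥ λ_d are real numbers with Σᵢ λᵢ < 0, and h is a real number with 0 ≤ h ≤ Σ_{λᵢ>0} λᵢ. Let k be the largest index such that Σ_{i=1}^k λᵢ ≥ h (with k = 0 if λ₁ < h), and assume k < d with λ_{k+1} < 0. Then the quantity d_μ = k + (h − Σ_{i=1}^k λᵢ)/|λ_{k+1}| satisfies d_μ < d. -/

import Mathlib

/-- Analytic core of the Ledrappier–Young dimension formula: for ordered Lyapunov
exponents `λ₁ ≥ … ≥ λ_d` with negative sum, metric entropy `0 ≤ h ≤ Σ_{λᵢ>0} λᵢ`,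
and `k` the largest index with `Σ_{i≤k} λᵢ ≥ h` (with `k = 0` by convention if no such
index exists), if `k < d` and `λ_{k+1} < 0` then
`d_μ = k + (h − Σ_{i≤k} λᵢ)/|λ_{k+1}| < d`. -/
theorem ledrappier_young_dimension_lt_ambient {d : ℕ} (l : Fin d → ℝ) (h : ℝ)
    (hmono : ∀ i j : Fin d, i ≤ j → l j ≤ l i)
    (hdiss : ∑ i, l i < 0)
    (hh0 : 0 ≤ h)
    (hhR : h ≤ ∑ i ∈ Finset.univ.filter (fun i : Fin d => 0 < l i), l i)
    (k : ℕ) (hkd : k < d)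
    (hk : h ≤ ∑ i ∈ Finset.univ.filter (fun i : Fin d => (i : ℕ) < k), l i ∨ k = 0)
    (hkmax : ∀ m : ℕ, m ≤ d →
      h ≤ ∑ i ∈ Finset.univ.filter (fun i : Fin d => (i : ℕ) < m), l i → m ≤ k)
    (hneg : l ⟨k, hkd⟩ < 0) :
    (k : ℝ) +
        (h - ∑ i ∈ Finset.univ.filter (fun i : Fin d => (i : ℕ) < k), l i) /
          |l ⟨k, hkd⟩| < d := by
  have habs : 0 < |l ⟨k, hkd⟩| := abs_pos.mpr (ne_of_lt hneg)
  have hkdR : (k : ℝ) < d := by exact_mod_cast hkd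
  rcases hk with hk | hk
  · have h1 : (h - ∑ i ∈ Finset.univ.filter (fun i : Fin d => (i : ℕ) < k), l i) /
        |l ⟨k, hkd⟩| ≤ 0 :=
      div_nonpos_of_nonpos_of_nonneg (by linarith) (le_of_lt habs)
    linarith
  · subst hk
    have hall : ∀ i : Fin d, l i < 0 := fun i =>
      lt_of_le_of_lt (hmono ⟨0, hkd⟩ i (Fin.mk_le_mk.mpr (Nat.zero_le _))) hneg
    have hpos : (Finset.univ.filter (fun i : Fin d => 0 < l i)) = ∅ := by
      apply Finset.filter_false_of_mem
      intro i _
      exact not_lt.mpr (le_of_lt (hall i))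
    rw [hpos, Finset.sum_empty] at hhR
    have hS : ∑ i ∈ Finset.univ.filter (fun i : Fin d => (i : ℕ) < 0), l i = 0 := by
      simp
    have hh : h = 0 := le_antisymm hhR hh0
    rw [hS, hh]
    simpa using hkdR
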